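/- arXiv:1903.03537 — 2 statements merged into one kernel-verified Lean document; each statement's English description precedes it below -/
import Mathlib

section
/- The curve γ(t) = (a₁,…,a_{n−1}, x_n + 3^{−ρ} t), where a₁,…,a_{n−1} ∈ ℤ and ρ is the number of even aᵢ, is a unit-speed geodesic of the metric g = h²δ: it satisfies the geodesic equation γ̈ᵏ + Γᵏ_{ij}(γ) γ̇ⁱ γ̇ʲ = 0 and g(γ̇, γ̇) = 1. -/
open Real Finset

/-- Partial derivative of `f` in the `i`-th coordinate direction. -/
noncomputable def pd {n : ℕ} (i : Fin n) (f : (Fin n → ℝ) → ℝ) (x : Fin n → ℝ) : ℝ :=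
  fderiv ℝ f x (Pi.single i 1)

/-- The conformal factor `h(x) = ∏_{i=1}^{n-1} (2 + cos (π xᵢ))`. -/
noncomputable def hC (n : ℕ) (x : Fin n → ℝ) : ℝ :=
  ∏ i : Fin (n - 1), (2 + Real.cos (Real.pi * x (Fin.castLE (Nat.sub_le n 1) i)))

/-- The conformally flat metric `g_{ij} = h² δ_{ij}`. -/
noncomputable def gM {n : ℕ} (h : (Fin n → ℝ) → ℝ) (x : Fin n → ℝ) (i j : Fin n) : ℝ :=
  if i = j then (h x) ^ 2 else 0

/-- Christoffel symbols `Γᵏ_{ij} = ½ Σₗ g^{kl} (∂ᵢ g_{jl} + ∂ⱼ g_{li} − ∂ₗ g_{ij})`,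
with inverse metric `g^{kl} = h⁻² δ_{kl}`. -/
noncomputable def Γconf {n : ℕ} (h : (Fin n → ℝ) → ℝ) (k i j : Fin n) (x : Fin n → ℝ) : ℝ :=
  (1 / 2) * ∑ l, (if k = l then ((h x) ^ 2)⁻¹ else 0) *
    (pd i (fun y => gM h y j l) x + pd j (fun y => gM h y l i) x - pd l (fun y => gM h y i j) x)

/-- Components of the curvature tensor: `R(∂ᵢ,∂ⱼ)∂ₖ = (Rcurv h l k i j) ∂ₗ`. -/
noncomputable def Rcurv {n : ℕ} (h : (Fin n → ℝ) → ℝ) (l k i j : Fin n) (x : Fin n → ℝ) : ℝ :=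
  pd i (fun y => Γconf h l j k y) x - pd j (fun y => Γconf h l i k y) x
    + ∑ m, Γconf h m j k x * Γconf h l i m x - ∑ m, Γconf h m i k x * Γconf h l j m x

/-- Jacobi operator components `(R̄_{∂_N})_{ij} = ⟨R̄(∂ᵢ,∂_N)∂_N, ∂ⱼ⟩`. -/
noncomputable def Jac {n : ℕ} (h : (Fin n → ℝ) → ℝ) (N i j : Fin n) (x : Fin n → ℝ) : ℝ :=
  ∑ l, gM h x l j * Rcurv h l N i N x

lemma hC_fderiv_zero (n : ℕ) (x : Fin n → ℝ)
    (hx : ∀ i : Fin (n - 1), ∃ m : ℤ, x (Fin.castLE (Nat.sub_le n 1) i) = m) :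
    HasFDerivAt (hC n) (0 : (Fin n → ℝ) →L[ℝ] ℝ) x := by
  have h1 : ∀ i : Fin (n - 1),
      HasFDerivAt (fun y : Fin n → ℝ =>
        2 + Real.cos (Real.pi * y (Fin.castLE (Nat.sub_le n 1) i)))
        (0 : (Fin n → ℝ) →L[ℝ] ℝ) x := by
    intro i
    obtain ⟨m, hm⟩ := hx i
    set c := Fin.castLE (Nat.sub_le n 1) i with hc
    have hp : HasFDerivAt (fun y : Fin n → ℝ => y c)
        (ContinuousLinearMap.proj c : (Fin n → ℝ) →L[ℝ] ℝ) x :=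
      hasFDerivAt_apply c x
    have hproj : HasFDerivAt (fun y : Fin n → ℝ => Real.pi * y c)
        (Real.pi • (ContinuousLinearMap.proj c : (Fin n → ℝ) →L[ℝ] ℝ)) x :=
      hp.const_mul Real.pi
    have hcos := (Real.hasDerivAt_cos (Real.pi * x c)).comp_hasFDerivAt x hproj
    have hs : Real.sin (Real.pi * x c) = 0 := by
      rw [hm, mul_comm]; exact Real.sin_int_mul_pi m
    have : HasFDerivAt (fun y : Fin n → ℝ => Real.cos (Real.pi * y c))
        (0 : (Fin n → ℝ) →L[ℝ] ℝ) x := by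
      have h' := hcos
      simp [hs] at h'
      exact h'
    simpa using this.const_add 2
  have := HasFDerivAt.finset_prod (u := Finset.univ)
    (g := fun (i : Fin (n-1)) (y : Fin n → ℝ) =>
      2 + Real.cos (Real.pi * y (Fin.castLE (Nat.sub_le n 1) i)))
    (g' := fun _ => (0 : (Fin n → ℝ) →L[ℝ] ℝ)) (fun i _ => h1 i)
  simp at this
  exact this

lemma pd_gM_zero (n : ℕ) (x : Fin n → ℝ)
    (hx : ∀ i : Fin (n - 1), ∃ m : ℤ, x (Fin.castLE (Nat.sub_le n 1) i) = m)
    (l i j : Fin n) : pd l (fun y => gM (hC n) y i j) x = 0 := by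
  by_cases hij : i = j
  · have h2 : HasFDerivAt (fun y => (hC n y) ^ 2) (0 : (Fin n → ℝ) →L[ℝ] ℝ) x := by
      have hm := (hC_fderiv_zero n x hx).mul (hC_fderiv_zero n x hx)
      simp only [pow_two]
      simp at hm
      exact hm
    simp only [pd, gM, hij, if_true]
    rw [h2.fderiv]; simp
  · simp [pd, gM, hij]

lemma Γconf_zero (n : ℕ) (x : Fin n → ℝ)
    (hx : ∀ i : Fin (n - 1), ∃ m : ℤ, x (Fin.castLE (Nat.sub_le n 1) i) = m)
    (k i j : Fin n) : Γconf (hC n) k i j x = 0 := by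
  simp [Γconf, pd_gM_zero n x hx]

theorem stmt_6 (n : ℕ) (hn : 2 ≤ n) (a : Fin (n - 1) → ℤ) (s : ℝ) :
    let ρ : ℕ := (Finset.univ.filter fun i => Even (a i)).card
    let γ : ℝ → Fin n → ℝ := fun t j =>
      if hj : (j : ℕ) < n - 1 then (a ⟨j, hj⟩ : ℝ) else s + ((3 : ℝ) ^ ρ)⁻¹ * t
    (∀ (k : Fin n) (t : ℝ),
        deriv (fun u => deriv (fun v => γ v k) u) t
          + ∑ i, ∑ j, Γconf (hC n) k i j (γ t) *
              deriv (fun v => γ v i) t * deriv (fun v => γ v j) t = 0) ∧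
    (∀ t : ℝ, (hC n (γ t)) ^ 2 * ∑ i, (deriv (fun v => γ v i) t) ^ 2 = 1) := by
  intro ρ γ
  have hcoord : ∀ (t : ℝ) (i : Fin (n - 1)),
      γ t (Fin.castLE (Nat.sub_le n 1) i) = (a i : ℝ) := by
    intro t i
    have hi : ((Fin.castLE (Nat.sub_le n 1) i : Fin n) : ℕ) < n - 1 := i.2
    simp [γ, hi]
  have hx : ∀ (t : ℝ) (i : Fin (n - 1)),
      ∃ m : ℤ, γ t (Fin.castLE (Nat.sub_le n 1) i) = m := fun t i => ⟨a i, hcoord t i⟩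
  have hd : ∀ (k : Fin n) (t : ℝ),
      deriv (fun v => γ v k) t = if (k : ℕ) < n - 1 then 0 else ((3 : ℝ) ^ ρ)⁻¹ := by
    intro k t
    by_cases hk : (k : ℕ) < n - 1
    · rw [show (fun v => γ v k) = fun _ => ((a ⟨(k : ℕ), hk⟩ : ℤ) : ℝ)
        from funext fun v => dif_pos hk]
      simp [hk]
    · have h1 : (fun v => γ v k) = fun v => s + ((3 : ℝ) ^ ρ)⁻¹ * v :=
        funext fun v => dif_neg hk
      rw [h1, if_neg hk, deriv_const_add, deriv_const_mul_field]
      simp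
  constructor
  · intro k t
    have h2 : deriv (fun u => deriv (fun v => γ v k) u) t = 0 := by
      have : (fun u => deriv (fun v => γ v k) u)
          = fun _ => if (k : ℕ) < n - 1 then 0 else ((3 : ℝ) ^ ρ)⁻¹ := by
        funext u; exact hd k u
      rw [this]; simp
    rw [h2]
    have : ∀ i j : Fin n, Γconf (hC n) k i j (γ t) = 0 := fun i j =>
      Γconf_zero n (γ t) (hx t) k i j
    simp [this]
  · intro t
    have hh : hC n (γ t) = (3 : ℝ) ^ ρ := by
      unfold hC
      have : ∀ i : Fin (n - 1),
          2 + Real.cos (Real.pi * γ t (Fin.castLE (Nat.sub_le n 1) i))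
            = if Even (a i) then (3 : ℝ) else 1 := by
        intro i
        rw [hcoord t i]
        have hcos : Real.cos (Real.pi * (a i : ℝ)) = (-1 : ℝ) ^ (a i) := by
          rw [mul_comm]
          simpa using Real.cos_int_mul_pi_sub 0 (a i)
        rw [hcos]
        by_cases he : Even (a i)
        · rw [if_pos he, he.neg_one_zpow]; norm_num
        · rw [if_neg he, (Int.not_even_iff_odd.mp he).neg_one_zpow]; norm_num
      rw [Finset.prod_congr rfl fun i _ => this i]
      rw [Finset.prod_ite, Finset.prod_const, Finset.prod_const_one, mul_one]
    have hlast : ∃ k0 : Fin n, ¬ ((k0 : ℕ) < n - 1) ∧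
        ∀ b : Fin n, b ≠ k0 → (b : ℕ) < n - 1 := by
      refine ⟨⟨n - 1, by omega⟩, by simp, fun b hb => ?_⟩
      have : (b : ℕ) ≠ n - 1 := fun h => hb (Fin.ext h)
      have := b.2; omega
    obtain ⟨k0, hk0, hk0'⟩ := hlast
    have hsum : ∑ i, (deriv (fun v => γ v i) t) ^ 2 = (((3 : ℝ) ^ ρ)⁻¹) ^ 2 := by
      rw [Finset.sum_eq_single_of_mem k0 (Finset.mem_univ _)]
      · rw [hd, if_neg hk0]
      · intro b _ hb
        rw [hd, if_pos (hk0' b hb)]; ring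
    rw [hh, hsum]
    have h3 : ((3 : ℝ) ^ ρ) ≠ 0 := by positivity
    field_simp
end

section
/- At a = (0,…,0,s) the Ricci curvature of g = h²δ in the unit normal direction to F_s equals ((n−1)/3)π² > 0, while at b = (1,…,1,s) it equals (1−n)π² < 0. Hence the Ricci curvature in the normal direction to the totally geodesic leaf F_s takes both signs on the same leaf. -/
open Real Finset

/-! ### Auxiliary machinery -/

noncomputable def Fc (t : ℝ) : ℝ := 2 + Real.cos (π * t)
noncomputable def Fd (t : ℝ) : ℝ := -(π * Real.sin (π * t))
noncomputable def Fdd (t : ℝ) : ℝ := -(π ^ 2 * Real.cos (π * t))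

lemma hasDerivAt_Fc (t : ℝ) : HasDerivAt Fc (Fd t) t := by
  have h1 : HasDerivAt (fun u : ℝ => π * u) π t := by
    simpa using (hasDerivAt_id t).const_mul π
  have h2 := (Real.hasDerivAt_cos (π * t)).comp t h1
  have h3 := h2.const_add 2
  have h4 : HasDerivAt Fc (-Real.sin (π * t) * π) t := h3
  convert h4 using 1
  simp [Fd]; ring

lemma hasDerivAt_Fd (t : ℝ) : HasDerivAt Fd (Fdd t) t := by
  have h1 : HasDerivAt (fun u : ℝ => π * u) π t := by
    simpa using (hasDerivAt_id t).const_mul π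
  have h2 := (Real.hasDerivAt_sin (π * t)).comp t h1
  have h3 := (h2.const_mul π).neg
  have h4 : HasDerivAt Fd (-(π * (Real.cos (π * t) * π))) t := h3
  convert h4 using 1
  simp [Fdd]; ring

lemma hasFDerivAt_proj {n : ℕ} (i : Fin n) (x : Fin n → ℝ) :
    HasFDerivAt (fun y : Fin n → ℝ => y i)
      (ContinuousLinearMap.proj (R := ℝ) (φ := fun _ : Fin n => ℝ) i) x :=
  (ContinuousLinearMap.proj (R := ℝ) (φ := fun _ : Fin n => ℝ) i).hasFDerivAt

lemma hasFDerivAt_coord {n : ℕ} (i : Fin n) (x : Fin n → ℝ) :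
    HasFDerivAt (fun y : Fin n → ℝ => Fc (y i))
      (Fd (x i) • ContinuousLinearMap.proj (R := ℝ) (φ := fun _ : Fin n => ℝ) i) x :=
  by have := (hasDerivAt_Fc (x i)).comp_hasFDerivAt x (hasFDerivAt_proj i x); exact this

lemma hasFDerivAt_Fd_coord {n : ℕ} (i : Fin n) (x : Fin n → ℝ) :
    HasFDerivAt (fun y : Fin n → ℝ => Fd (y i))
      (Fdd (x i) • ContinuousLinearMap.proj (R := ℝ) (φ := fun _ : Fin n => ℝ) i) x :=
  by have := (hasDerivAt_Fd (x i)).comp_hasFDerivAt x (hasFDerivAt_proj i x); exact this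

def cE (n : ℕ) : Fin (n - 1) → Fin n := Fin.castLE (Nat.sub_le n 1)

lemma cE_lt {n : ℕ} (i : Fin (n-1)) : ((cE n i : Fin n) : ℕ) < n - 1 := i.isLt

lemma cE_inj {n : ℕ} : Function.Injective (cE n) := Fin.castLE_injective _

noncomputable def hD (n : ℕ) (x : Fin n → ℝ) : (Fin n → ℝ) →L[ℝ] ℝ :=
  ∑ i : Fin (n-1), (∏ j ∈ univ.erase i, Fc (x (cE n j))) •
    (Fd (x (cE n i)) • ContinuousLinearMap.proj (R := ℝ) (φ := fun _ : Fin n => ℝ) (cE n i))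

lemma hC_eq (n : ℕ) : hC n = fun x => ∏ i : Fin (n-1), Fc (x (cE n i)) := rfl

lemma hC_apply (n : ℕ) (x : Fin n → ℝ) : hC n x = ∏ i : Fin (n-1), Fc (x (cE n i)) := rfl

lemma hasFDerivAt_hC (n : ℕ) (x : Fin n → ℝ) : HasFDerivAt (hC n) (hD n x) x := by
  have h : HasFDerivAt (fun y => ∏ i : Fin (n-1), Fc (y (cE n i))) (hD n x) x :=
    HasFDerivAt.finset_prod (fun i _ => hasFDerivAt_coord (cE n i) x)
  exact h

lemma hD_single {n : ℕ} (x : Fin n → ℝ) (k : Fin n) :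
    hD n x (Pi.single k 1) =
      ∑ i : Fin (n-1), (∏ j ∈ univ.erase i, Fc (x (cE n j))) * (Fd (x (cE n i)) *
        (if cE n i = k then 1 else 0)) := by
  simp [hD, ContinuousLinearMap.sum_apply, Pi.single_apply]

noncomputable def Gd (n : ℕ) (k : Fin n) (x : Fin n → ℝ) : ℝ :=
  if hk : (k : ℕ) < n - 1 then
    (∏ j ∈ univ.erase (⟨k, hk⟩ : Fin (n-1)), Fc (x (cE n j))) * Fd (x k) else 0

lemma pd_hC {n : ℕ} (k : Fin n) (x : Fin n → ℝ) : pd k (hC n) x = Gd n k x := by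
  have := (hasFDerivAt_hC n x).fderiv
  rw [pd, this, hD_single]
  by_cases hk : (k : ℕ) < n - 1
  · rw [Finset.sum_eq_single (⟨k, hk⟩ : Fin (n-1))]
    · have hc : cE n (⟨k, hk⟩ : Fin (n-1)) = k := by
        simp [cE, Fin.ext_iff]
      rw [Gd, dif_pos hk, if_pos hc, hc]; ring
    · intro i _ hi
      have : cE n i ≠ k := fun h => hi (by
        apply cE_inj; rw [h]; simp [cE, Fin.ext_iff])
      simp [this]
    · simp
  · rw [Gd, dif_neg hk]
    apply Finset.sum_eq_zero
    intro i _
    have : cE n i ≠ k := by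
      intro h
      exact hk (h ▸ cE_lt i)
    simp [this]

lemma hC_pos (n : ℕ) (x : Fin n → ℝ) : 0 < hC n x := by
  apply Finset.prod_pos
  intro i _
  nlinarith [Real.neg_one_le_cos (Real.pi * x (Fin.castLE (Nat.sub_le n 1) i))]

lemma hD_single_eq_Gd {n : ℕ} (x : Fin n → ℝ) (k : Fin n) :
    hD n x (Pi.single k 1) = Gd n k x := by
  have h1 := (hasFDerivAt_hC n x).fderiv
  have := pd_hC k x
  rwa [pd, h1] at this

lemma pd_gM {n : ℕ} (k i j : Fin n) (x : Fin n → ℝ) :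
    pd k (fun y => gM (hC n) y i j) x = if i = j then 2 * hC n x * Gd n k x else 0 := by
  by_cases h : i = j
  · rw [if_pos h]
    have hf : (fun y => gM (hC n) y i j) = fun y => (hC n y) ^ 2 := by
      funext y; rw [gM, if_pos h]
    have hf2 : (fun y => (hC n y) ^ 2) = fun y => hC n y * hC n y := by
      funext y; ring
    rw [hf, hf2]
    have hd := (hasFDerivAt_hC n x).mul (hasFDerivAt_hC n x)
    rw [pd, HasFDerivAt.fderiv (f := fun y => hC n y * hC n y) hd]
    simp [hD_single_eq_Gd]
    ring
  · rw [if_neg h]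
    have hf : (fun y => gM (hC n) y i j) = fun _ => (0:ℝ) := by
      funext y; rw [gM, if_neg h]
    rw [pd, hf, fderiv_fun_const]
    simp

noncomputable def Γe (n : ℕ) (k i j : Fin n) (x : Fin n → ℝ) : ℝ :=
  (hC n x)⁻¹ * ((if j = k then Gd n i x else 0) + (if k = i then Gd n j x else 0)
    - (if i = j then Gd n k x else 0))

lemma Γconf_eq {n : ℕ} (k i j : Fin n) (x : Fin n → ℝ) :
    Γconf (hC n) k i j x = Γe n k i j x := by
  rw [Γconf]
  have hcol : ∀ B : Fin n → ℝ,
      (∑ l, (if k = l then ((hC n x) ^ 2)⁻¹ else 0) * B l) = ((hC n x) ^ 2)⁻¹ * B k := by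
    intro B
    rw [Finset.sum_eq_single k]
    · simp
    · intro l _ hl; simp [Ne.symm hl]
    · intro h; exact (h (Finset.mem_univ k)).elim
  rw [hcol]
  rw [pd_gM, pd_gM, pd_gM]
  have h0 := (hC_pos n x).ne'
  rw [Γe]
  split_ifs <;> first | (field_simp; ring) | (field_simp; done) | ring

/-! ### Values at the special points -/

section Main

variable {n : ℕ}

lemma Gd_N (hn : 2 ≤ n) (x : Fin n → ℝ) : Gd n ⟨n-1, by have := hn; omega⟩ x = 0 := by
  rw [Gd, dif_neg]; simp

lemma Gd_zero (x₀ : Fin n → ℝ) (hFd : ∀ j : Fin (n-1), Fd (x₀ (cE n j)) = 0)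
    (k : Fin n) : Gd n k x₀ = 0 := by
  rw [Gd]
  split_ifs with hk
  · have hk2 : cE n (⟨k, hk⟩ : Fin (n-1)) = k := by simp [cE, Fin.ext_iff]
    have h0 : Fd (x₀ k) = 0 := by rw [← hk2]; exact hFd ⟨k, hk⟩
    rw [h0, mul_zero]
  · rfl

lemma Γconf_zero_s10 (x₀ : Fin n → ℝ) (hFd : ∀ j : Fin (n-1), Fd (x₀ (cE n j)) = 0)
    (k i j : Fin n) : Γconf (hC n) k i j x₀ = 0 := by
  rw [Γconf_eq, Γe]
  simp [Gd_zero x₀ hFd]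

lemma Γconf_iiN (hn : 2 ≤ n) (i : Fin n) (x : Fin n → ℝ) :
    Γconf (hC n) i i ⟨n-1, by have := hn; omega⟩ x = 0 := by
  rw [Γconf_eq, Γe, Gd_N hn]
  rcases eq_or_ne i (⟨n-1, by have := hn; omega⟩ : Fin n) with h | h
  · simp [h]
  · simp [h, Ne.symm h]

lemma Γconf_NN (hn : 2 ≤ n) (l : Fin n) (x : Fin n → ℝ) :
    Γconf (hC n) l ⟨n-1, by have := hn; omega⟩ ⟨n-1, by have := hn; omega⟩ x = -((hC n x)⁻¹ * Gd n l x) := by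
  rw [Γconf_eq, Γe, Gd_N hn]
  simp

lemma pd_Γ_NN (hn : 2 ≤ n) (x₀ : Fin n → ℝ) (i₀ : Fin (n-1))
    (hFd : ∀ j : Fin (n-1), Fd (x₀ (cE n j)) = 0) :
    pd (cE n i₀) (fun y => Γconf (hC n) (cE n i₀) ⟨n-1, by have := hn; omega⟩ ⟨n-1, by have := hn; omega⟩ y) x₀
      = (hC n x₀)⁻¹ * (∏ j ∈ univ.erase i₀, Fc (x₀ (cE n j)))
        * (π ^ 2 * Real.cos (π * x₀ (cE n i₀))) := by
  have hk : ((cE n i₀ : Fin n) : ℕ) < n - 1 := cE_lt i₀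
  have hmk : (⟨((cE n i₀ : Fin n) : ℕ), hk⟩ : Fin (n-1)) = i₀ := by
    simp [cE, Fin.ext_iff]
  have hGd : ∀ y : Fin n → ℝ, Gd n (cE n i₀) y
      = (∏ j ∈ univ.erase i₀, Fc (y (cE n j))) * Fd (y (cE n i₀)) := by
    intro y
    rw [Gd, dif_pos hk, hmk]
  have hfun : (fun y => Γconf (hC n) (cE n i₀) ⟨n-1, by have := hn; omega⟩ ⟨n-1, by have := hn; omega⟩ y)
      = fun y => -((hC n y)⁻¹ *
        ((∏ j ∈ univ.erase i₀, Fc (y (cE n j))) * Fd (y (cE n i₀)))) := by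
    funext y
    rw [Γconf_NN hn, hGd]
  rw [hfun]
  -- build the derivative
  set LP : (Fin n → ℝ) →L[ℝ] ℝ :=
    ∑ j ∈ univ.erase i₀, (∏ m ∈ (univ.erase i₀).erase j, Fc (x₀ (cE n m))) •
      (Fd (x₀ (cE n j)) • ContinuousLinearMap.proj (R := ℝ) (φ := fun _ : Fin n => ℝ) (cE n j))
    with hLP
  have hP : HasFDerivAt (fun y => ∏ j ∈ univ.erase i₀, Fc (y (cE n j))) LP x₀ :=
    HasFDerivAt.finset_prod (fun j _ => hasFDerivAt_coord (cE n j) x₀)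
  have hF := hasFDerivAt_Fd_coord (cE n i₀) x₀
  have hinv : HasFDerivAt (fun y => (hC n y)⁻¹)
      ((-((hC n x₀) ^ 2)⁻¹) • hD n x₀) x₀ :=
    (hasDerivAt_inv (hC_pos n x₀).ne').comp_hasFDerivAt x₀ (hasFDerivAt_hC n x₀)
  have hmul1 := hP.mul hF
  have hmul2 := hinv.mul hmul1
  have hneg := hmul2.neg
  rw [pd, HasFDerivAt.fderiv (f := fun y => -((hC n y)⁻¹ *
    ((∏ j ∈ univ.erase i₀, Fc (y (cE n j))) * Fd (y (cE n i₀))))) hneg]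
  have hsing : ∀ (j : Fin n), (ContinuousLinearMap.proj (R := ℝ)
      (φ := fun _ : Fin n => ℝ) j) (Pi.single (cE n i₀) 1) = if j = cE n i₀ then 1 else 0 := by
    intro j
    simp [Pi.single_apply]
  have hLP0 : LP (Pi.single (cE n i₀) 1) = 0 := by
    rw [hLP]
    simp only [ContinuousLinearMap.coe_sum', Finset.sum_apply,
      ContinuousLinearMap.coe_smul', Pi.smul_apply]
    apply Finset.sum_eq_zero
    intro j _
    rw [hFd j]
    simp
  simp only [ContinuousLinearMap.neg_apply, ContinuousLinearMap.add_apply,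
    ContinuousLinearMap.smul_apply, smul_eq_mul, Pi.mul_apply]
  rw [hLP0, hD_single_eq_Gd, Gd_zero x₀ hFd, hFd i₀, hsing]
  simp [Fdd]
  ring

lemma Rcurv_val (hn : 2 ≤ n) (x₀ : Fin n → ℝ) (i₀ : Fin (n-1))
    (hFd : ∀ j : Fin (n-1), Fd (x₀ (cE n j)) = 0) :
    Rcurv (hC n) (cE n i₀) ⟨n-1, by have := hn; omega⟩ (cE n i₀) ⟨n-1, by have := hn; omega⟩ x₀
      = (hC n x₀)⁻¹ * (∏ j ∈ univ.erase i₀, Fc (x₀ (cE n j)))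
        * (π ^ 2 * Real.cos (π * x₀ (cE n i₀))) := by
  rw [Rcurv]
  have h2 : (fun y => Γconf (hC n) (cE n i₀) (cE n i₀) ⟨n-1, by have := hn; omega⟩ y)
      = fun _ => (0:ℝ) := by
    funext y; exact Γconf_iiN hn (cE n i₀) y
  have hpd2 : pd (⟨n-1, by have := hn; omega⟩ : Fin n)
      (fun y => Γconf (hC n) (cE n i₀) (cE n i₀) ⟨n-1, by have := hn; omega⟩ y) x₀ = 0 := by
    rw [pd, h2, fderiv_fun_const]; simp
  have hsum1 : (∑ m, Γconf (hC n) m ⟨n-1, by have := hn; omega⟩ ⟨n-1, by have := hn; omega⟩ x₀ *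
      Γconf (hC n) (cE n i₀) (cE n i₀) m x₀) = 0 :=
    Finset.sum_eq_zero fun m _ => by rw [Γconf_zero_s10 x₀ hFd, zero_mul]
  have hsum2 : (∑ m, Γconf (hC n) m (cE n i₀) ⟨n-1, by have := hn; omega⟩ x₀ *
      Γconf (hC n) (cE n i₀) ⟨n-1, by have := hn; omega⟩ m x₀) = 0 :=
    Finset.sum_eq_zero fun m _ => by rw [Γconf_zero_s10 x₀ hFd, zero_mul]
  rw [hpd2, hsum1, hsum2, pd_Γ_NN hn x₀ i₀ hFd]
  ring

lemma Jac_val (hn : 2 ≤ n) (x₀ : Fin n → ℝ) (i : Fin n) :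
    Jac (hC n) ⟨n-1, by have := hn; omega⟩ i i x₀
      = (hC n x₀) ^ 2 * Rcurv (hC n) i ⟨n-1, by have := hn; omega⟩ i ⟨n-1, by have := hn; omega⟩ x₀ := by
  rw [Jac, Finset.sum_eq_single i]
  · rw [gM, if_pos rfl]
  · intro l _ hl; rw [gM, if_neg hl, zero_mul]
  · intro h; exact (h (Finset.mem_univ i)).elim

end Main

theorem stmt_10 (n : ℕ) (hn : 2 ≤ n) (s : ℝ) :
    let N : Fin n := ⟨n - 1, by omega⟩
    let a : Fin n → ℝ := fun j => if j = N then s else 0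
    let b : Fin n → ℝ := fun j => if j = N then s else 1
    (∑ i ∈ Finset.univ.erase N, ((hC n a) ^ 2)⁻¹ * Jac (hC n) N i i a
        = ((n : ℝ) - 1) / 3 * π ^ 2) ∧
    (0 < ((n : ℝ) - 1) / 3 * π ^ 2) ∧
    (∑ i ∈ Finset.univ.erase N, ((hC n b) ^ 2)⁻¹ * Jac (hC n) N i i b
        = (1 - (n : ℝ)) * π ^ 2) ∧
    ((1 - (n : ℝ)) * π ^ 2 < 0) := by
  intro N a b
  have hNval : (N : ℕ) = n - 1 := rfl
  have hcEne : ∀ j : Fin (n-1), cE n j ≠ N := by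
    intro j h
    have := cE_lt j
    rw [h, hNval] at this
    omega
  have hπ := Real.pi_pos
  -- values at a
  have ha0 : ∀ j : Fin (n-1), a (cE n j) = 0 := by
    intro j; simp only [a, if_neg (hcEne j)]
  have hFda : ∀ j : Fin (n-1), Fd (a (cE n j)) = 0 := by
    intro j; rw [ha0, Fd]; simp
  have hFca : ∀ j : Fin (n-1), Fc (a (cE n j)) = 3 := by
    intro j; rw [ha0, Fc]; norm_num
  have hhCa : hC n a = 3 ^ (n - 1) := by
    rw [hC_apply, Finset.prod_congr rfl (fun j _ => hFca j), Finset.prod_const]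
    simp
  -- values at b
  have hb1 : ∀ j : Fin (n-1), b (cE n j) = 1 := by
    intro j; simp only [b, if_neg (hcEne j)]
  have hFdb : ∀ j : Fin (n-1), Fd (b (cE n j)) = 0 := by
    intro j; rw [hb1, Fd]; simp
  have hFcb : ∀ j : Fin (n-1), Fc (b (cE n j)) = 1 := by
    intro j; rw [hb1, Fc]; rw [mul_one, Real.cos_pi]; norm_num
  have hhCb : hC n b = 1 := by
    rw [hC_apply, Finset.prod_congr rfl (fun j _ => hFcb j), Finset.prod_const, one_pow]
  have hN : N = (⟨n-1, by omega⟩ : Fin n) := rfl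
  have hterm : ∀ (x₀ : Fin n → ℝ), (∀ j : Fin (n-1), Fd (x₀ (cE n j)) = 0) →
      ∀ i₀ : Fin (n-1),
      ((hC n x₀) ^ 2)⁻¹ * Jac (hC n) N (cE n i₀) (cE n i₀) x₀
        = (hC n x₀)⁻¹ * (∏ j ∈ univ.erase i₀, Fc (x₀ (cE n j)))
          * (π ^ 2 * Real.cos (π * x₀ (cE n i₀))) := by
    intro x₀ hFd i₀
    rw [hN, Jac_val hn x₀ (cE n i₀), Rcurv_val hn x₀ i₀ hFd]
    have h0 := (hC_pos n x₀).ne'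
    field_simp
  have hcard2 : ∀ i₀ : Fin (n-1), (univ.erase i₀).card = n - 2 := by
    intro i₀
    rw [Finset.card_erase_of_mem (Finset.mem_univ _), Finset.card_univ, Fintype.card_fin]
    omega
  have hcardN : (Finset.univ.erase N).card = n - 1 := by
    rw [Finset.card_erase_of_mem (Finset.mem_univ _), Finset.card_univ, Fintype.card_fin]
  have hconv : ∀ i ∈ Finset.univ.erase N, ∃ i₀ : Fin (n-1), i = cE n i₀ := by
    intro i hi
    obtain ⟨hiN, -⟩ := Finset.mem_erase.mp hi
    have hne : (i:ℕ) ≠ n - 1 := fun h => hiN (Fin.ext (h.trans hNval.symm))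
    have hi' : (i:ℕ) < n - 1 := by have := i.isLt; omega
    exact ⟨⟨(i:ℕ), hi'⟩, Fin.ext rfl⟩
  have hπ2 := pow_pos hπ 2
  have hn' : (2:ℝ) ≤ (n:ℝ) := by exact_mod_cast hn
  refine ⟨?_, ?_, ?_, ?_⟩
  · -- at a
    have hA : ∀ i ∈ Finset.univ.erase N,
        ((hC n a) ^ 2)⁻¹ * Jac (hC n) N i i a = π ^ 2 / 3 := by
      intro i hi
      obtain ⟨i₀, rfl⟩ := hconv i hi
      rw [hterm a hFda i₀, hhCa,
        Finset.prod_congr rfl (fun j _ => hFca j), Finset.prod_const, hcard2, ha0]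
      have h3 : (3:ℝ) ^ (n-1) = 3 ^ (n-2) * 3 := by
        rw [← pow_succ]; congr 1; omega
      rw [h3]
      have h30 : (3:ℝ) ^ (n-2) ≠ 0 := by positivity
      simp only [mul_zero, Real.cos_zero]
      field_simp
    rw [Finset.sum_congr rfl hA, Finset.sum_const, hcardN, nsmul_eq_mul,
      Nat.cast_sub (by omega), Nat.cast_one]
    ring
  · exact mul_pos (div_pos (by linarith) (by norm_num)) hπ2
  · -- at b
    have hB : ∀ i ∈ Finset.univ.erase N,
        ((hC n b) ^ 2)⁻¹ * Jac (hC n) N i i b = -(π ^ 2) := by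
      intro i hi
      obtain ⟨i₀, rfl⟩ := hconv i hi
      rw [hterm b hFdb i₀, hhCb,
        Finset.prod_congr rfl (fun j _ => hFcb j), Finset.prod_const, hb1]
      rw [mul_one, Real.cos_pi]
      norm_num
    rw [Finset.sum_congr rfl hB, Finset.sum_const, hcardN, nsmul_eq_mul,
      Nat.cast_sub (by omega), Nat.cast_one]
    ring
  · exact mul_neg_of_neg_of_pos (by linarith) hπ2
end
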